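/- Approval voting is immune to destructive control by partition of candidates with the ties-promote rule in the nonunique-winner model: if p is a winner of approval election (C,V), then for every partition (C₁,C₂) of C with C₁ ∪ C₂ = C and C₁ ∩ C₂ = ∅, p is a winner of the final-round approval election whose candidate set is W(C₁) ∪ W(C₂) and whose votes are V restricted to that set, where W(Cᵢ) denotes the set of all winners of the approval subelection (Cᵢ,V). -/
import Mathlib
open Classical

/-- Number of votes in `V` approving candidate `c`. -/
def appCount {α : Type*} (V : List (α → Bool)) (c : α) : ℕ :=
  (V.filter (fun v => v c)).length

/-- Winner set of the approval election on candidate set `C` with votes `V`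
(approval counts are invariant under restricting votes to `C`).  The winner set
of the empty candidate set is empty. -/
noncomputable def appWinners {α : Type*} (C : Finset α) (V : List (α → Bool)) : Finset α :=
  C.filter (fun c => ∀ d ∈ C, appCount V d ≤ appCount V c)

/-- approval is immune to DC-PC-TP-NUW.  If `p` wins `(C,V)`, then for
every partition `(C₁, C₂)` of `C`, `p` wins the final-round approval election on
`W(C₁) ∪ W(C₂)`. -/
theorem approval_immune_dc_pc_tp_nuw {α : Type*} (C C₁ C₂ : Finset α)
    (V : List (α → Bool)) (p : α)
    (hwin : p ∈ appWinners C V)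
    (hcup : C₁ ∪ C₂ = C) (hdisj : C₁ ∩ C₂ = ∅) :
    p ∈ appWinners (appWinners C₁ V ∪ appWinners C₂ V) V := by
  simp only [appWinners, Finset.mem_filter, Finset.mem_union] at *
  obtain ⟨hpC, hmax⟩ := hwin
  have hsub : ∀ d, d ∈ C₁ ∨ d ∈ C₂ → d ∈ C := by
    intro d hd; rw [← hcup]; exact Finset.mem_union.mpr hd
  have hpmem : p ∈ C₁ ∨ p ∈ C₂ := by rw [← hcup] at hpC; exact Finset.mem_union.mp hpC
  constructor
  · rcases hpmem with h | h
    · exact Or.inl ⟨h, fun d hd => hmax d (hsub d (Or.inl hd))⟩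
    · exact Or.inr ⟨h, fun d hd => hmax d (hsub d (Or.inr hd))⟩
  · rintro d (⟨hd, -⟩ | ⟨hd, -⟩) <;> exact hmax d (hsub d (by tauto))
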